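/- Let S = ℂ[x_0, …, x_n], let I ⊆ S be a homogeneous ideal, let d ≥ 2 be an integer and set c = h_I(d). Then for every integer k with 0 ≤ k ≤ d: (a) if c ≤ d then h_I(k) ≥ min(c, k+1); (b) if d+1 ≤ c ≤ 2d then h_I(k) ≥ min(k + (c−d), 2k+1); (c) if c = 2d+1 then h_I(k) ≥ 2k+1. -/

import Mathlib

open MvPolynomial

/-- An ideal of `ℂ[x_0,…,x_n]` is homogeneous if it contains all homogeneous
components of its elements. -/
def IsHomogeneousIdeal {n : ℕ} (I : Ideal (MvPolynomial (Fin (n + 1)) ℂ)) : Prop :=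
  ∀ f ∈ I, ∀ k : ℕ, homogeneousComponent k f ∈ I

/-- The Hilbert function of an ideal `I ⊆ ℂ[x_0,…,x_n]`:
`h_I(k) = dim S_k - dim (I ∩ S_k)`. -/
noncomputable def hilbertFn {n : ℕ} (I : Ideal (MvPolynomial (Fin (n + 1)) ℂ))
    (k : ℕ) : ℕ :=
  Module.finrank ℂ (homogeneousSubmodule (Fin (n + 1)) ℂ k) -
    Module.finrank ℂ
      (Submodule.restrictScalars ℂ I ⊓ homogeneousSubmodule (Fin (n + 1)) ℂ k :
        Submodule ℂ (MvPolynomial (Fin (n + 1)) ℂ))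


namespace HilbComb

open Finsupp

attribute [local instance] Classical.propDecidable

variable {τ : Type*}

/-- The "lower shadow" of a set of exponent vectors: all results of subtracting 1
from one coordinate. -/
noncomputable def shadow (L : Finset (τ →₀ ℕ)) : Finset (τ →₀ ℕ) :=
  L.biUnion fun m => m.support.image fun i => m - Finsupp.single i 1

lemma mem_shadow {L : Finset (τ →₀ ℕ)} {μ : τ →₀ ℕ} :
    μ ∈ shadow L ↔ ∃ m ∈ L, ∃ i, m i ≠ 0 ∧ m - Finsupp.single i 1 = μ := by
  simp [shadow, Finset.mem_biUnion, Finset.mem_image, Finsupp.mem_support_iff]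

lemma shadow_mono {L L' : Finset (τ →₀ ℕ)} (h : L ⊆ L') : shadow L ⊆ shadow L' := by
  intro μ hμ
  rw [mem_shadow] at hμ ⊢
  obtain ⟨m, hm, i, hi, he⟩ := hμ
  exact ⟨m, h hm, i, hi, he⟩

lemma sub_single_add {m : τ →₀ ℕ} {i : τ} (h : m i ≠ 0) :
    (m - Finsupp.single i 1) + Finsupp.single i 1 = m := by
  ext a
  rcases eq_or_ne a i with rfl | hne
  · simp only [Finsupp.add_apply, Finsupp.tsub_apply, Finsupp.single_eq_same]
    omega
  · simp [Finsupp.single_eq_of_ne hne]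

lemma sub_single_apply_ne {m : τ →₀ ℕ} {i a : τ} (h : a ≠ i) :
    ((m - Finsupp.single i 1 : τ →₀ ℕ) : τ → ℕ) a = m a := by
  rw [Finsupp.tsub_apply]
  simp [Finsupp.single_eq_of_ne h]

lemma sub_single_apply_eq (m : τ →₀ ℕ) (i : τ) :
    ((m - Finsupp.single i 1 : τ →₀ ℕ) : τ → ℕ) i = m i - 1 := by
  rw [Finsupp.tsub_apply]
  simp

lemma support_sub_single {m : τ →₀ ℕ} {i : τ} :
    (m - Finsupp.single i 1).support ⊆ m.support := by
  intro a ha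
  rw [Finsupp.mem_support_iff] at ha ⊢
  rcases eq_or_ne a i with rfl | hne
  · rw [sub_single_apply_eq] at ha; omega
  · rwa [sub_single_apply_ne hne] at ha

lemma degree_single (i : τ) : Finsupp.degree (Finsupp.single i (1:ℕ)) = 1 := by
  classical
  rw [Finsupp.degree_single]

lemma degree_sub_single {m : τ →₀ ℕ} {i : τ} (h : m i ≠ 0) :
    Finsupp.degree (m - Finsupp.single i 1) = Finsupp.degree m - 1 := by
  have hsing := degree_single (τ := τ) i
  have h2 : Finsupp.degree ((m - Finsupp.single i 1) + Finsupp.single i 1)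
      = Finsupp.degree (m - Finsupp.single i 1) + 1 := by
    simp only [Finsupp.degree_eq_weight_one] at hsing ⊢
    rw [map_add, hsing]
  rw [sub_single_add h] at h2
  omega

lemma support_nonempty_of_degree {m : τ →₀ ℕ} {d : ℕ} (hd : 1 ≤ d)
    (h : Finsupp.degree m = d) : ∃ i, m i ≠ 0 := by
  by_contra hc
  push_neg at hc
  have : m = 0 := by ext a; simp [hc a]
  rw [this, map_zero] at h
  omega

lemma sub_sub_comm (m : τ →₀ ℕ) (i t : τ) :
    m - Finsupp.single t 1 - Finsupp.single i 1
      = m - Finsupp.single i 1 - Finsupp.single t 1 := by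
  ext a
  simp only [Finsupp.tsub_apply]
  omega

theorem shadow_card_bounds :
    ∀ (N d : ℕ), 1 ≤ d → ∀ (s : Finset τ) (L : Finset (τ →₀ ℕ)),
      d + s.card ≤ N → L.Nonempty →
      (∀ m ∈ L, Finsupp.degree m = d ∧ m.support ⊆ s) →
      min L.card d ≤ (shadow L).card ∧
        min (L.card - 1) (2 * d - 1) ≤ (shadow L).card := by
  intro N
  induction N with
  | zero => intro d hd s L hN; omega
  | succ N ih =>
    intro d hd s L hN hLne hL
    obtain ⟨m₀, hm₀⟩ := hLne
    have hLne : L.Nonempty := ⟨m₀, hm₀⟩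
    obtain ⟨i₀, hi₀⟩ := support_nonempty_of_degree hd (hL m₀ hm₀).1
    have hshne : (m₀ - Finsupp.single i₀ 1) ∈ shadow L :=
      mem_shadow.2 ⟨m₀, hm₀, i₀, hi₀, rfl⟩
    have hsh1 : 1 ≤ (shadow L).card := Finset.card_pos.2 ⟨_, hshne⟩
    have hLc : 1 ≤ L.card := Finset.card_pos.2 ⟨m₀, hm₀⟩
    rcases eq_or_lt_of_le hd with hd1 | hd2
    · constructor <;> omega
    · -- d ≥ 2
      have hd2' : 2 ≤ d := hd2
      have hts : i₀ ∈ s := (hL m₀ hm₀).2 (Finsupp.mem_support_iff.2 hi₀)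
      have hs1 : 1 ≤ s.card := Finset.card_pos.2 ⟨i₀, hts⟩
      set t := i₀ with ht
      set L0 := L.filter (fun m => m t = 0) with hL0def
      set Lp := L.filter (fun m => ¬ (m t = 0)) with hLpdef
      have hsplit : L0.card + Lp.card = L.card :=
        Finset.card_filter_add_card_filter_not _
      have hinj : ∀ x ∈ Lp, ∀ y ∈ Lp,
          x - Finsupp.single t 1 = y - Finsupp.single t 1 → x = y := by
        intro x hx y hy hxy
        have hxt : x t ≠ 0 := (Finset.mem_filter.1 hx).2
        have hyt : y t ≠ 0 := (Finset.mem_filter.1 hy).2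
        have := congrArg (· + Finsupp.single t 1) hxy
        simpa [sub_single_add hxt, sub_single_add hyt] using this
      set M := Lp.image (fun m => m - Finsupp.single t 1) with hMdef
      have hMcard : M.card = Lp.card := Finset.card_image_of_injOn hinj
      by_cases hLpe : Lp = ∅
      · -- all of L is t-free : recurse with s.erase t
        have hall : ∀ m ∈ L, m t = 0 := by
          intro m hm
          by_contra hc
          have : m ∈ Lp := Finset.mem_filter.2 ⟨hm, hc⟩
          simp [hLpe] at this
        apply ih d hd (s.erase t) L ?_ hLne ?_
        · have := Finset.card_erase_of_mem hts
          omega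
        · intro m hm
          refine ⟨(hL m hm).1, ?_⟩
          intro a ha
          refine Finset.mem_erase.2 ⟨?_, (hL m hm).2 ha⟩
          rintro rfl
          exact (Finsupp.mem_support_iff.1 ha) (hall m hm)
      by_cases hL0e : L0 = ∅
      · -- every element of L is divisible by t
        have hallp : ∀ m ∈ L, m t ≠ 0 := by
          intro m hm hc
          have : m ∈ L0 := Finset.mem_filter.2 ⟨hm, hc⟩
          simp [hL0e] at this
        have hle : L.card ≤ (shadow L).card := by
          apply Finset.card_le_card_of_injOn (fun m => m - Finsupp.single t 1)
          · intro m hm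
            exact mem_shadow.2 ⟨m, hm, t, hallp m hm, rfl⟩
          · intro x hx y hy hxy
            exact hinj x (Finset.mem_filter.2 ⟨hx, hallp x hx⟩)
              y (Finset.mem_filter.2 ⟨hy, hallp y hy⟩) hxy
        constructor <;> omega
      -- main case : both L0 and Lp nonempty
      have hL0ne : L0.Nonempty := Finset.nonempty_iff_ne_empty.2 hL0e
      have hLpne : Lp.Nonempty := Finset.nonempty_iff_ne_empty.2 hLpe
      have hL0c : 1 ≤ L0.card := Finset.card_pos.2 hL0ne
      have hLpc : 1 ≤ Lp.card := Finset.card_pos.2 hLpne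
      have hMne : M.Nonempty := hLpne.image _
      have hMmem : ∀ μ ∈ M, Finsupp.degree μ = d - 1 ∧ μ.support ⊆ s := by
        intro μ hμ
        obtain ⟨m, hm, rfl⟩ := Finset.mem_image.1 hμ
        have hmL : m ∈ L := (Finset.mem_filter.1 hm).1
        have hmt : m t ≠ 0 := (Finset.mem_filter.1 hm).2
        exact ⟨by rw [degree_sub_single hmt, (hL m hmL).1],
          fun a ha => (hL m hmL).2 (support_sub_single ha)⟩
      have IHM := ih (d-1) (by omega) s M (by omega) hMne hMmem
      have hL0mem : ∀ m ∈ L0, Finsupp.degree m = d ∧ m.support ⊆ s.erase t := by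
        intro m hm
        have hmL : m ∈ L := (Finset.mem_filter.1 hm).1
        have hmt : m t = 0 := (Finset.mem_filter.1 hm).2
        refine ⟨(hL m hmL).1, fun a ha => Finset.mem_erase.2 ⟨?_, (hL m hmL).2 ha⟩⟩
        rintro rfl
        exact (Finsupp.mem_support_iff.1 ha) hmt
      have IHL0 := ih d hd (s.erase t) L0
        (by have := Finset.card_erase_of_mem hts; omega) hL0ne hL0mem
      set S0 := (shadow L).filter (fun μ => μ t = 0) with hS0def
      set S1 := (shadow L).filter (fun μ => ¬ (μ t = 0)) with hS1def
      have hS01 : S0.card + S1.card = (shadow L).card :=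
        Finset.card_filter_add_card_filter_not _
      -- shadow M injects into S1 via + single t 1
      have hS1 : (shadow M).card ≤ S1.card := by
        apply Finset.card_le_card_of_injOn (fun μ => μ + Finsupp.single t 1)
        · intro μ hμ
          simp only [Finset.mem_coe] at hμ ⊢
          rw [mem_shadow] at hμ
          obtain ⟨m', hm', i, hi, heq⟩ := hμ
          obtain ⟨m, hm, rfl⟩ := Finset.mem_image.1 hm'
          have hmL : m ∈ L := (Finset.mem_filter.1 hm).1
          have hmt : m t ≠ 0 := (Finset.mem_filter.1 hm).2
          subst heq
          rcases eq_or_ne i t with rfl | hit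
          · rw [sub_single_add hi]
            refine Finset.mem_filter.2 ⟨mem_shadow.2 ⟨m, hmL, t, hmt, rfl⟩, ?_⟩
            simpa [ht] using hi
          · have hmi : m i ≠ 0 := by
              have := sub_single_apply_ne (m := m) (i := t) (a := i) hit
              omega
            have hrw : m - Finsupp.single t 1 - Finsupp.single i 1 + Finsupp.single t 1
                = m - Finsupp.single i 1 := by
              rw [sub_sub_comm]
              apply sub_single_add
              have := sub_single_apply_ne (m := m) (i := i) (a := t) (Ne.symm hit)
              omega
            rw [hrw]
            refine Finset.mem_filter.2 ⟨mem_shadow.2 ⟨m, hmL, i, hmi, rfl⟩, ?_⟩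
            have := sub_single_apply_ne (m := m) (i := i) (a := t) (Ne.symm hit)
            omega
        · intro x hx y hy hxy
          exact add_right_cancel hxy
      -- shadow L0 lands in S0
      have hsubL0 : shadow L0 ⊆ S0 := by
        intro μ hμ
        have hμL : μ ∈ shadow L := shadow_mono (Finset.filter_subset _ _) hμ
        rw [mem_shadow] at hμ
        obtain ⟨m, hm, i, hi, heq⟩ := hμ
        have hmt : m t = 0 := (Finset.mem_filter.1 hm).2
        refine Finset.mem_filter.2 ⟨hμL, ?_⟩
        subst heq
        rcases eq_or_ne t i with rfl | hti
        · rw [sub_single_apply_eq]; omega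
        · rw [sub_single_apply_ne hti]; omega
      have hS0a : (shadow L0).card ≤ S0.card := Finset.card_le_card hsubL0
      -- the t-free part of M lands in S0
      set M0 := M.filter (fun μ => μ t = 0) with hM0def
      have hM0 : M0.card ≤ S0.card := by
        apply Finset.card_le_card
        intro μ hμ
        have hμM : μ ∈ M := (Finset.mem_filter.1 hμ).1
        have hμt : μ t = 0 := (Finset.mem_filter.1 hμ).2
        obtain ⟨m, hm, rfl⟩ := Finset.mem_image.1 hμM
        exact Finset.mem_filter.2
          ⟨mem_shadow.2 ⟨m, (Finset.mem_filter.1 hm).1, t,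
            (Finset.mem_filter.1 hm).2, rfl⟩, hμt⟩
      have hM0M : M0.card ≤ M.card := Finset.card_filter_le _ _
      -- the t-positive part of M injects into shadow M
      have hMsh : M.card - M0.card ≤ (shadow M).card := by
        have h1 : (M.filter (fun μ => ¬ (μ t = 0))).card ≤ (shadow M).card := by
          apply Finset.card_le_card_of_injOn (fun μ => μ - Finsupp.single t 1)
          · intro μ hμ
            exact mem_shadow.2 ⟨μ, (Finset.mem_filter.1 hμ).1, t,
              (Finset.mem_filter.1 hμ).2, rfl⟩
          · intro x hx y hy hxy
            have hxt : x t ≠ 0 := (Finset.mem_filter.1 hx).2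
            have hyt : y t ≠ 0 := (Finset.mem_filter.1 hy).2
            have := congrArg (· + Finsupp.single t 1) hxy
            simpa [sub_single_add hxt, sub_single_add hyt] using this
        have h2 : (M.filter (fun μ => μ t = 0)).card
            + (M.filter (fun μ => ¬ (μ t = 0))).card = M.card :=
          Finset.card_filter_add_card_filter_not _
        rw [hM0def]
        omega
      -- S0 is nonempty
      have hS0ne : 1 ≤ S0.card := by
        obtain ⟨m₁, hm₁⟩ := hL0ne
        obtain ⟨i₁, hi₁⟩ := support_nonempty_of_degree (by omega)
          (hL m₁ (Finset.mem_filter.1 hm₁).1).1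
        have : (m₁ - Finsupp.single i₁ 1) ∈ shadow L0 :=
          mem_shadow.2 ⟨m₁, hm₁, i₁, hi₁, rfl⟩
        exact Finset.card_pos.2 ⟨_, hsubL0 this⟩
      obtain ⟨ihm1, ihm2⟩ := IHM
      obtain ⟨ihl1, ihl2⟩ := IHL0
      simp only [hL0def, hLpdef, hMdef, hS0def, hS1def, hM0def] at hsplit hMcard hL0c hLpc ihm1 ihm2 ihl1 ihl2 hS01 hS1 hS0a hM0 hM0M hMsh hS0ne hsh1 hLc ⊢
      constructor <;> omega

end HilbComb


namespace HilbLM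

open MvPolynomial Finsupp

attribute [local instance] Classical.propDecidable

variable {n : ℕ}

abbrev Mon (n : ℕ) := Fin (n+1) →₀ ℕ
abbrev Poly (n : ℕ) := MvPolynomial (Fin (n+1)) ℂ

/-- The leading monomial (w.r.t. lex) of a polynomial, `⊥` for `0`. -/
noncomputable def lmax (f : Poly n) : WithBot (Lex (Mon n)) :=
  (f.support.image toLex).max

lemma lmax_coeff {f : Poly n} {a : Lex (Mon n)} (h : lmax f = (a : WithBot (Lex (Mon n)))) :
    MvPolynomial.coeff (ofLex a) f ≠ 0 := by
  have := Finset.mem_of_max h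
  obtain ⟨ν, hν, hh⟩ := Finset.mem_image.1 this
  rw [MvPolynomial.mem_support_iff] at hν
  have : ν = ofLex a := congrArg ofLex hh
  rwa [this] at hν

lemma le_lmax {f : Poly n} {ν : Mon n} (h : MvPolynomial.coeff ν f ≠ 0) :
    ((toLex ν : Lex (Mon n)) : WithBot (Lex (Mon n))) ≤ lmax f :=
  Finset.le_max (Finset.mem_image_of_mem _ (MvPolynomial.mem_support_iff.2 h))

lemma lmax_exists {f : Poly n} (h : f ≠ 0) : ∃ a : Lex (Mon n), lmax f = a := by
  apply Finset.max_of_nonempty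
  exact (MvPolynomial.support_nonempty.2 h).image _

lemma lmax_eq_bot {f : Poly n} (h : lmax f = ⊥) : f = 0 := by
  by_contra hc
  obtain ⟨a, ha⟩ := lmax_exists hc
  rw [h] at ha
  exact (WithBot.bot_ne_coe ha)

lemma lmax_lt_of_forall {f : Poly n} {a : Lex (Mon n)}
    (h : ∀ ν : Mon n, MvPolynomial.coeff ν f ≠ 0 → toLex ν < a) :
    lmax f < (a : WithBot (Lex (Mon n))) := by
  rcases Finset.eq_empty_or_nonempty (f.support.image toLex) with he | hne
  · rw [lmax, he]
    exact WithBot.bot_lt_coe a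
  · obtain ⟨b, hb⟩ := Finset.max_of_nonempty hne
    rw [lmax, hb, WithBot.coe_lt_coe]
    obtain ⟨ν, hν, rfl⟩ := Finset.mem_image.1 (Finset.mem_of_max hb)
    exact h ν (MvPolynomial.mem_support_iff.1 hν)

lemma lmax_X_mul {f : Poly n} {a : Lex (Mon n)} (i : Fin (n+1))
    (h : lmax f = (a : WithBot (Lex (Mon n)))) :
    lmax (X i * f) = ((toLex (Finsupp.single i 1) + a : Lex (Mon n)) : WithBot (Lex (Mon n))) := by
  have hsupp : (X i * f).support = f.support.map (addLeftEmbedding (Finsupp.single i 1)) :=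
    MvPolynomial.support_X_mul i f
  apply le_antisymm
  · apply Finset.max_le
    intro b hb
    obtain ⟨ν, hν, rfl⟩ := Finset.mem_image.1 hb
    rw [hsupp, Finset.mem_map] at hν
    obtain ⟨ρ, hρ, rfl⟩ := hν
    rw [WithBot.coe_le_coe]
    show toLex (Finsupp.single i 1 + ρ) ≤ _
    rw [toLex_add]
    apply add_le_add_right
    have : ((toLex ρ : Lex (Mon n)) : WithBot (Lex (Mon n))) ≤ ↑a := by
      rw [← h]; exact Finset.le_max (Finset.mem_image_of_mem _ hρ)
    exact_mod_cast this
  · apply Finset.le_max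
    rw [Finset.mem_image]
    refine ⟨Finsupp.single i 1 + ofLex a, ?_, by rw [toLex_add]; rfl⟩
    rw [hsupp, Finset.mem_map]
    exact ⟨ofLex a, MvPolynomial.mem_support_iff.2 (lmax_coeff h), rfl⟩

theorem finrank_eq_card_lm (W : Submodule ℂ (Poly n)) (T : Finset (Mon n))
    (hWT : ∀ f ∈ W, f.support ⊆ T) :
    Module.finrank ℂ W
      = (T.filter fun μ => ∃ f ∈ W,
          lmax f = ((toLex μ : Lex (Mon n)) : WithBot (Lex (Mon n)))).card := by
  set Λ := T.filter fun μ => ∃ f ∈ W,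
      lmax f = ((toLex μ : Lex (Mon n)) : WithBot (Lex (Mon n))) with hΛdef
  set g : Mon n → Poly n := fun μ =>
    if h : ∃ f, f ∈ (W : Set (Poly n)) ∧ lmax f = ((toLex μ : Lex (Mon n)) : WithBot (Lex (Mon n)))
    then h.choose else 0 with hgdef
  have hg : ∀ μ ∈ Λ, g μ ∈ W ∧
      lmax (g μ) = ((toLex μ : Lex (Mon n)) : WithBot (Lex (Mon n))) := by
    intro μ hμ
    obtain ⟨hT, f, hfW, hfl⟩ := Finset.mem_filter.1 hμ
    have hex : ∃ f, f ∈ (W : Set (Poly n)) ∧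
        lmax f = ((toLex μ : Lex (Mon n)) : WithBot (Lex (Mon n))) := ⟨f, hfW, hfl⟩
    rw [hgdef]
    simp only [dif_pos hex]
    exact hex.choose_spec
  have hginj : Set.InjOn g ↑Λ := by
    intro x hx y hy hxy
    have h1 := (hg x hx).2
    have h2 := (hg y hy).2
    rw [hxy, h2] at h1
    have h3 := WithBot.coe_injective h1
    exact (toLex.injective h3).symm
  set E := Λ.image g with hEdef
  have hEcard : E.card = Λ.card := Finset.card_image_of_injOn hginj
  have hEW : ∀ f ∈ E, f ∈ W := by
    intro f hf
    obtain ⟨μ, hμ, rfl⟩ := Finset.mem_image.1 hf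
    exact (hg μ hμ).1
  -- linear independence of E
  have hind : LinearIndependent ℂ (fun x => (x : Poly n) : ((E : Set (Poly n)) : Set (Poly n)) → Poly n) := by
    rw [linearIndependent_subtype_iff, linearIndepOn_iff]
    intro l hl hsum
    by_contra hl0
    have hsupne : l.support.Nonempty := Finsupp.support_nonempty_iff.2 hl0
    obtain ⟨f₀, hf₀sup, hmax⟩ := Finset.exists_max_image l.support (fun f => lmax f) hsupne
    have hlsub : ↑l.support ⊆ (E : Set (Poly n)) := (Finsupp.mem_supported ℂ l).1 hl
    have hf₀E : f₀ ∈ E := hlsub hf₀sup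
    obtain ⟨μ₀, hμ₀, hf₀⟩ := Finset.mem_image.1 hf₀E
    have hf₀l : lmax f₀ = ((toLex μ₀ : Lex (Mon n)) : WithBot (Lex (Mon n))) := by
      rw [← hf₀]; exact (hg μ₀ hμ₀).2
    have hkey := congrArg (MvPolynomial.coeff μ₀) hsum
    rw [Finsupp.linearCombination_apply, Finsupp.sum, MvPolynomial.coeff_sum] at hkey
    simp only [id, MvPolynomial.coeff_smul, smul_eq_mul] at hkey
    have hzero : ∀ f ∈ l.support, f ≠ f₀ → MvPolynomial.coeff μ₀ f = 0 := by
      intro f hf hne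
      by_contra hc
      have h1 : ((toLex μ₀ : Lex (Mon n)) : WithBot (Lex (Mon n))) ≤ lmax f := le_lmax hc
      have h2 : lmax f ≤ lmax f₀ := hmax f hf
      -- f ∈ E with lmax f = lmax f₀ would force f = f₀
      obtain ⟨μ₁, hμ₁, hf₁⟩ := Finset.mem_image.1 (hlsub hf)
      have hfl : lmax f = ((toLex μ₁ : Lex (Mon n)) : WithBot (Lex (Mon n))) := by
        rw [← hf₁]; exact (hg μ₁ hμ₁).2
      have heq : lmax f = lmax f₀ := le_antisymm h2 (by rw [hf₀l]; exact h1)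
      rw [hfl, hf₀l] at heq
      have : μ₁ = μ₀ := toLex.injective (WithBot.coe_injective heq)
      rw [← hf₁, ← hf₀, this] at hne
      exact hne rfl
    rw [Finset.sum_eq_single f₀ (fun f hf hne => by rw [hzero f hf hne, mul_zero])
      (fun h => absurd hf₀sup h)] at hkey
    have hc₀ : MvPolynomial.coeff μ₀ f₀ ≠ 0 := by
      have := lmax_coeff hf₀l
      exact this
    have hl₀ : l f₀ ≠ 0 := Finsupp.mem_support_iff.1 hf₀sup
    exact hl₀ (by
      rcases mul_eq_zero.1 hkey with h | h
      · exact h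
      · exact absurd h hc₀)
  -- E spans W
  have hspan : Submodule.span ℂ ((E : Set (Poly n))) = W := by
    apply le_antisymm
    · rw [Submodule.span_le]
      intro f hf
      exact hEW f hf
    · intro f hfW
      have main : ∀ (k : ℕ) (f : Poly n), f ∈ W →
          (T.filter fun ν =>
            ((toLex ν : Lex (Mon n)) : WithBot (Lex (Mon n))) ≤ lmax f).card ≤ k →
          f ∈ Submodule.span ℂ ((E : Set (Poly n))) := by
        intro k
        induction k with
        | zero =>
          intro f hfW hcard
          by_contra hns
          have hf0 : f ≠ 0 := by rintro rfl; exact hns (Submodule.zero_mem _)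
          obtain ⟨a₀, ha₀⟩ := lmax_exists hf0
          have hμT : ofLex a₀ ∈ T := hWT f hfW (MvPolynomial.mem_support_iff.2 (lmax_coeff ha₀))
          have : (ofLex a₀) ∈ T.filter fun ν =>
              ((toLex ν : Lex (Mon n)) : WithBot (Lex (Mon n))) ≤ lmax f := by
            refine Finset.mem_filter.2 ⟨hμT, ?_⟩
            rw [ha₀]
            exact le_rfl
          have := Finset.card_pos.2 ⟨_, this⟩
          omega
        | succ k ih =>
          intro f hfW hcard
          by_cases hf0 : f = 0
          · rw [hf0]; exact Submodule.zero_mem _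
          obtain ⟨a₀, ha₀⟩ := lmax_exists hf0
          set μ₀ := ofLex a₀ with hμ₀def
          have htl : (toLex μ₀ : Lex (Mon n)) = a₀ := rfl
          have hμT : μ₀ ∈ T := hWT f hfW (MvPolynomial.mem_support_iff.2 (lmax_coeff ha₀))
          have hμΛ : μ₀ ∈ Λ := Finset.mem_filter.2 ⟨hμT, ⟨f, hfW, by rw [htl, ha₀]⟩⟩
          have hpW : g μ₀ ∈ W := (hg μ₀ hμΛ).1
          have hpl : lmax (g μ₀) = ((toLex μ₀ : Lex (Mon n)) : WithBot (Lex (Mon n))) :=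
            (hg μ₀ hμΛ).2
          have hpc : MvPolynomial.coeff μ₀ (g μ₀) ≠ 0 := lmax_coeff hpl
          set c : ℂ := MvPolynomial.coeff μ₀ f / MvPolynomial.coeff μ₀ (g μ₀) with hcdef
          set f' := f - c • (g μ₀) with hf'def
          have hf'W : f' ∈ W := Submodule.sub_mem _ hfW (Submodule.smul_mem _ _ hpW)
          have hc0 : MvPolynomial.coeff μ₀ f' = 0 := by
            rw [hf'def, MvPolynomial.coeff_sub, MvPolynomial.coeff_smul, hcdef, smul_eq_mul, div_mul_cancel₀ _ hpc, sub_self]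
          have hlt : ∀ ν : Mon n, MvPolynomial.coeff ν f' ≠ 0 → toLex ν < a₀ := by
            intro ν hν
            have hor : MvPolynomial.coeff ν f ≠ 0 ∨ MvPolynomial.coeff ν (g μ₀) ≠ 0 := by
              by_contra hc
              push_neg at hc
              apply hν
              rw [hf'def, MvPolynomial.coeff_sub, MvPolynomial.coeff_smul, hc.1, hc.2]
              simp
            have hle : ((toLex ν : Lex (Mon n)) : WithBot (Lex (Mon n))) ≤ ↑a₀ := by
              rcases hor with h | h
              · rw [← ha₀]; exact le_lmax h
              · rw [← htl, ← hpl]; exact le_lmax h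
            rw [WithBot.coe_le_coe] at hle
            rcases lt_or_eq_of_le hle with h | h
            · exact h
            · exfalso
              have : ν = μ₀ := toLex.injective (by rw [h, htl])
              rw [this] at hν
              exact hν hc0
          have hstrict : lmax f' < (a₀ : WithBot (Lex (Mon n))) := lmax_lt_of_forall hlt
          have hcard' : (T.filter fun ν =>
              ((toLex ν : Lex (Mon n)) : WithBot (Lex (Mon n))) ≤ lmax f').card ≤ k := by
            have hss : (T.filter fun ν =>
                ((toLex ν : Lex (Mon n)) : WithBot (Lex (Mon n))) ≤ lmax f')
                ⊂ (T.filter fun ν =>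
                ((toLex ν : Lex (Mon n)) : WithBot (Lex (Mon n))) ≤ lmax f) := by
              constructor
              · intro ν hν
                obtain ⟨h1, h2⟩ := Finset.mem_filter.1 hν
                refine Finset.mem_filter.2 ⟨h1, ?_⟩
                rw [ha₀]
                exact le_of_lt (lt_of_le_of_lt h2 hstrict)
              · intro hcon
                have hμ₀mem : μ₀ ∈ T.filter fun ν =>
                    ((toLex ν : Lex (Mon n)) : WithBot (Lex (Mon n))) ≤ lmax f :=
                  Finset.mem_filter.2 ⟨hμT, by rw [htl, ha₀]⟩
                have := Finset.mem_filter.1 (hcon hμ₀mem)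
                rw [htl] at this
                exact absurd (lt_of_le_of_lt this.2 hstrict) (lt_irrefl _)
            have := Finset.card_lt_card hss
            omega
          have hf'span := ih f' hf'W hcard'
          have hgE : g μ₀ ∈ (E : Set (Poly n)) := Finset.mem_coe.2 (Finset.mem_image_of_mem g hμΛ)
          have : f = f' + c • (g μ₀) := by rw [hf'def]; ring
          rw [this]
          exact Submodule.add_mem _ hf'span
            (Submodule.smul_mem _ _ (Submodule.subset_span hgE))
      exact main T.card f hfW (Finset.card_filter_le _ _)
  have hfr : Module.finrank ℂ W = E.card := by
    rw [← hspan]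
    exact finrank_span_finset_eq_card hind
  rw [hfr, hEcard]

end HilbLM

namespace HilbGlue

open HilbLM HilbComb Finsupp

attribute [local instance] Classical.propDecidable

variable {n : ℕ}

/-- The finset of monomials in `n+1` variables of total degree `k`. -/
lemma Tset_finite (n k : ℕ) : {μ : Mon n | Finsupp.degree μ = k}.Finite := by
  apply Set.Finite.subset (Finsupp.finite_of_degree_le k)
  intro μ hμ
  simp only [Set.mem_setOf_eq] at hμ ⊢
  omega

noncomputable def Tset (n k : ℕ) : Finset (Mon n) := (Tset_finite n k).toFinset

lemma mem_Tset {k : ℕ} {μ : Mon n} : μ ∈ Tset n k ↔ Finsupp.degree μ = k := by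
  simp [Tset, Set.Finite.mem_toFinset, Set.mem_setOf_eq]

lemma supp_subset_Tset {k : ℕ} {f : Poly n}
    (hf : f ∈ homogeneousSubmodule (Fin (n + 1)) ℂ k) : f.support ⊆ Tset n k := by
  intro μ hμ
  rw [mem_Tset]
  have := (mem_homogeneousSubmodule _ _).1 hf (MvPolynomial.mem_support_iff.1 hμ)
  rw [Finsupp.degree_eq_weight_one]
  exact this

lemma lmax_monomial (μ : Mon n) : lmax ((monomial μ) (1 : ℂ)) = ((toLex μ : Lex (Mon n)) : WithBot (Lex (Mon n))) := by
  rw [lmax]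
  classical
  rw [support_monomial, if_neg (one_ne_zero)]
  simp

lemma finrank_homog (k : ℕ) :
    Module.finrank ℂ (homogeneousSubmodule (Fin (n + 1)) ℂ k) = (Tset n k).card := by
  rw [finrank_eq_card_lm (homogeneousSubmodule (Fin (n + 1)) ℂ k) (Tset n k)
    (fun f hf => supp_subset_Tset hf)]
  congr 1
  apply Finset.filter_true_of_mem
  intro μ hμ
  exact ⟨monomial μ 1, (mem_homogeneousSubmodule _ _).2
    (isHomogeneous_monomial 1 (mem_Tset.1 hμ)), lmax_monomial μ⟩

variable (I : Ideal (MvPolynomial (Fin (n + 1)) ℂ))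

/-- The degree-`k` part of `I` as a `ℂ`-submodule. -/
noncomputable abbrev Wk (k : ℕ) : Submodule ℂ (Poly n) :=
  Submodule.restrictScalars ℂ I ⊓ homogeneousSubmodule (Fin (n + 1)) ℂ k

/-- Leading monomials of the degree-`k` part of `I`. -/
noncomputable def Lam (k : ℕ) : Finset (Mon n) :=
  (Tset n k).filter fun μ => ∃ f ∈ Wk I k,
    lmax f = ((toLex μ : Lex (Mon n)) : WithBot (Lex (Mon n)))

/-- Standard monomials of degree `k`. -/
noncomputable def Nk (k : ℕ) : Finset (Mon n) := Tset n k \ Lam I k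

lemma hilbertFn_eq_card (k : ℕ) : hilbertFn I k = (Nk I k).card := by
  have h1 : Module.finrank ℂ (Wk I k) = (Lam I k).card :=
    finrank_eq_card_lm (Wk I k) (Tset n k)
      (fun f hf => supp_subset_Tset (inf_le_right (a := Submodule.restrictScalars ℂ I) hf))
  have h2 : Lam I k ⊆ Tset n k := Finset.filter_subset _ _
  rw [hilbertFn, finrank_homog, h1, Nk, Finset.card_sdiff_of_subset h2]

lemma shadow_Nk_subset (k : ℕ) : shadow (Nk I (k+1)) ⊆ Nk I k := by
  intro μ hμ
  rw [mem_shadow] at hμ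
  obtain ⟨m, hm, i, hi, rfl⟩ := hμ
  rw [Nk, Finset.mem_sdiff] at hm
  obtain ⟨hmT, hmΛ⟩ := hm
  have hmdeg : Finsupp.degree m = k + 1 := mem_Tset.1 hmT
  have hμdeg : Finsupp.degree (m - Finsupp.single i 1) = k := by
    rw [degree_sub_single hi, hmdeg]
    omega
  rw [Nk, Finset.mem_sdiff]
  refine ⟨mem_Tset.2 hμdeg, ?_⟩
  intro hΛ
  obtain ⟨-, f, hfW, hfl⟩ := Finset.mem_filter.1 hΛ
  apply hmΛ
  rw [Lam, Finset.mem_filter]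
  refine ⟨hmT, X i * f, ?_, ?_⟩
  · constructor
    · exact Ideal.mul_mem_left _ _ hfW.1
    · have h8 := (isHomogeneous_X ℂ i).mul ((mem_homogeneousSubmodule _ _).1 hfW.2)
      have h9 : (1 : ℕ) + k = k + 1 := by omega
      rw [h9] at h8
      exact (mem_homogeneousSubmodule _ _).2 h8
  · rw [lmax_X_mul i hfl, ← toLex_add]
    exact congrArg (fun ν => ((toLex ν : Lex (Mon n)) : WithBot (Lex (Mon n))))
      (by rw [add_comm]; exact sub_single_add hi)

lemma step (k : ℕ) :
    min (hilbertFn I (k+1)) (k+1) ≤ hilbertFn I k ∧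
    min (hilbertFn I (k+1) - 1) (2*k+1) ≤ hilbertFn I k := by
  rw [hilbertFn_eq_card I k, hilbertFn_eq_card I (k+1)]
  rcases Finset.eq_empty_or_nonempty (Nk I (k+1)) with he | hne
  · rw [he]
    simp only [Finset.card_empty]
    omega
  · have hb := shadow_card_bounds ((k+1) + (Finset.univ : Finset (Fin (n+1))).card)
      (k+1) (by omega) Finset.univ (Nk I (k+1)) (le_refl _) hne ?_
    · have hsub := Finset.card_le_card (shadow_Nk_subset I k)
      obtain ⟨hb1, hb2⟩ := hb
      constructor <;> omega
    · intro m hm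
      exact ⟨mem_Tset.1 (Finset.mem_sdiff.1 hm).1, Finset.subset_univ _⟩

end HilbGlue

/-- Let `I ⊆ ℂ[x_0,…,x_n]` be a homogeneous ideal, `d ≥ 2` and `c = h_I(d)`.
Then for `0 ≤ k ≤ d`:
(a) if `c ≤ d` then `h_I(k) ≥ min(c, k+1)`;
(b) if `d+1 ≤ c ≤ 2d` then `h_I(k) ≥ min(k + (c-d), 2k+1)`;
(c) if `c = 2d+1` then `h_I(k) ≥ 2k+1`. -/
theorem hilbert_fn_low_degree_bounds (n d : ℕ) (hd : 2 ≤ d)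
    (I : Ideal (MvPolynomial (Fin (n + 1)) ℂ)) (hI : IsHomogeneousIdeal I)
    (c : ℕ) (hc : c = hilbertFn I d) :
    ∀ k : ℕ, k ≤ d →
      (c ≤ d → hilbertFn I k ≥ min c (k + 1)) ∧
      (d + 1 ≤ c → c ≤ 2 * d → hilbertFn I k ≥ min (k + (c - d)) (2 * k + 1)) ∧
      (c = 2 * d + 1 → hilbertFn I k ≥ 2 * k + 1) := by
  intro k hk
  have claimA : ∀ m : ℕ, ∀ k, k + m = d → min (hilbertFn I d) (k+1) ≤ hilbertFn I k := by
    intro m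
    induction m with
    | zero =>
      intro k hkm
      have : k = d := by omega
      subst this
      omega
    | succ m ih =>
      intro k hkm
      have h1 := (HilbGlue.step I k).1
      have h2 := ih (k+1) (by omega)
      omega
  have claimB : ∀ m : ℕ, ∀ k, k + m = d →
      min (hilbertFn I d - (d - k)) (2*k+1) ≤ hilbertFn I k := by
    intro m
    induction m with
    | zero =>
      intro k hkm
      have : k = d := by omega
      subst this
      omega
    | succ m ih =>
      intro k hkm
      have h1 := (HilbGlue.step I k).2
      have h2 := ih (k+1) (by omega)
      omega
  have hA := claimA (d - k) k (by omega)
  have hB := claimB (d - k) k (by omega)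
  rw [← hc] at hA hB
  refine ⟨fun h => ?_, fun h1 h2 => ?_, fun h3 => ?_⟩
  · exact hA
  · omega
  · omega
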